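/- Let F(z) = Σ_{j=0}^∞ f_j(z) be a formal power series in n complex variables, where f_j is the homogeneous part of degree j. Suppose U is a nonempty open subset of the sphere of radius ε in ℂⁿ such that for every z ∈ U, the one-variable formal power series t ↦ F(tz) = Σ_j t^j f_j(z) is a polynomial (only finitely many nonzero coefficients). Then F is a polynomial, i.e., f_j ≡ 0 for all but finitely many j. -/

import Mathlib

open MvPolynomial

private lemma eval_mul_smul_hom {n j : ℕ} {φ : MvPolynomial (Fin n) ℂ} (h : φ.IsHomogeneous j)
    (c : ℂ) (x : Fin n → ℂ) :
    eval (fun i => c * x i) φ = c ^ j * eval x φ := by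
  rw [eval_eq, eval_eq, Finset.mul_sum]
  refine Finset.sum_congr rfl fun d hd => ?_
  have h3 : ∑ i ∈ d.support, d i = j := by
    have h2 := h (mem_support_iff.mp hd)
    simpa [Finsupp.weight_apply, Finsupp.sum] using h2
  simp_rw [mul_pow]
  rw [Finset.prod_mul_distrib, Finset.prod_pow_eq_pow_sum, h3]
  ring

theorem stmt_0 (n : ℕ) (ε : ℝ) (hε : 0 < ε)
    (f : ℕ → MvPolynomial (Fin n) ℂ)
    (hhom : ∀ j, (f j).IsHomogeneous j)
    (U : Set (EuclideanSpace ℂ (Fin n)))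
    (hUsub : U ⊆ Metric.sphere 0 ε)
    (hUopen : IsOpen (((↑) : Metric.sphere (0 : EuclideanSpace ℂ (Fin n)) ε → EuclideanSpace ℂ (Fin n)) ⁻¹' U))
    (hUne : U.Nonempty)
    (hpoly : ∀ z ∈ U, ∃ N : ℕ, ∀ j, N < j → MvPolynomial.eval (fun i => z i) (f j) = 0) :
    ∃ N : ℕ, ∀ j, N < j → f j = 0 := by
  classical
  obtain ⟨w, hw⟩ := hUne
  haveI : CompleteSpace (Metric.sphere (0:(EuclideanSpace ℂ (Fin n))) ε) := Metric.isClosed_sphere.completeSpace_coe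
  haveI : Nonempty (Metric.sphere (0:(EuclideanSpace ℂ (Fin n))) ε) := ⟨⟨w, hUsub hw⟩⟩
  set V : Set (Metric.sphere (0:(EuclideanSpace ℂ (Fin n))) ε) := ((↑) : Metric.sphere (0:(EuclideanSpace ℂ (Fin n))) ε → (EuclideanSpace ℂ (Fin n))) ⁻¹' U with hVdef
  -- analyticity of the evaluation maps
  have gan : ∀ j, AnalyticOnNhd ℂ (fun x :(EuclideanSpace ℂ (Fin n)) => eval (fun i => x i) (f j)) Set.univ := by
    intro j
    exact AnalyticOnNhd.eval_continuousLinearMap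
      (EuclideanSpace.equiv (Fin n) ℂ).toContinuousLinearMap (f j)
  have gcont : ∀ j, Continuous (fun x :(EuclideanSpace ℂ (Fin n)) => eval (fun i => x i) (f j)) := fun j =>
    continuousOn_univ.mp (gan j).continuousOn
  set C : ℕ → Set (Metric.sphere (0:(EuclideanSpace ℂ (Fin n))) ε) :=
    fun N => {z | ∀ j, N < j → eval (fun i => (z : (EuclideanSpace ℂ (Fin n))) i) (f j) = 0} with hCdef
  have hCclosed : ∀ N, IsClosed (C N) := by
    intro N
    have : C N = ⋂ j, ⋂ (_ : N < j),
        (fun z : Metric.sphere (0:(EuclideanSpace ℂ (Fin n))) ε => eval (fun i => (z : (EuclideanSpace ℂ (Fin n))) i) (f j)) ⁻¹' {0} := by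
      ext z; simp [hCdef, Set.mem_iInter]
    rw [this]
    exact isClosed_iInter fun j => isClosed_iInter fun _ =>
      IsClosed.preimage ((gcont j).comp continuous_subtype_val) isClosed_singleton
  have hDU : ⋃ N, (C N ∪ Vᶜ) = Set.univ := by
    ext z
    simp only [Set.mem_iUnion, Set.mem_union, Set.mem_univ, iff_true]
    by_cases hz : z ∈ V
    · obtain ⟨N, hN⟩ := hpoly z hz
      exact ⟨N, Or.inl hN⟩
    · exact ⟨0, Or.inr hz⟩
  have hdense := dense_iUnion_interior_of_closed
    (fun N => (hCclosed N).union hUopen.isClosed_compl) hDU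
  have hVne : V.Nonempty := ⟨⟨w, hUsub hw⟩, hw⟩
  obtain ⟨z, hzI, hzV⟩ := hdense.exists_mem_open hUopen hVne
  obtain ⟨N, hzN⟩ := Set.mem_iUnion.mp hzI
  set W := V ∩ interior (C N ∪ Vᶜ) with hWdef
  have hWopen : IsOpen W := hUopen.inter isOpen_interior
  have hzW : z ∈ W := ⟨hzV, hzN⟩
  have hWC : W ⊆ C N := fun x hx => (interior_subset hx.2).resolve_right fun h => h hx.1
  obtain ⟨O, hO, hOW⟩ := isOpen_induced_iff.mp hWopen
  refine ⟨N, fun j hj => ?_⟩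
  set g :(EuclideanSpace ℂ (Fin n)) → ℂ := fun x => eval (fun i => x i) (f j) with hgdef
  set r :(EuclideanSpace ℂ (Fin n)) →(EuclideanSpace ℂ (Fin n)) := fun x => ((ε / ‖x‖ : ℝ) : ℂ) • x with hrdef
  have hrcont : ContinuousOn r {x :(EuclideanSpace ℂ (Fin n)) | x ≠ 0} := by
    refine ContinuousOn.smul (f := fun x : EuclideanSpace ℂ (Fin n) => ((ε / ‖x‖ : ℝ) : ℂ)) ?_ continuous_id.continuousOn
    exact Complex.continuous_ofReal.comp_continuousOn
      (continuousOn_const.div continuous_norm.continuousOn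
        (fun x hx => norm_ne_zero_iff.mpr hx))
  set Ω : Set (EuclideanSpace ℂ (Fin n)) := {x :(EuclideanSpace ℂ (Fin n)) | x ≠ 0} ∩ r ⁻¹' O with hΩdef
  have hΩopen : IsOpen Ω := hrcont.isOpen_inter_preimage isOpen_ne hO
  have hznorm : ‖(z : (EuclideanSpace ℂ (Fin n)))‖ = ε := by
    have := z.2
    rwa [mem_sphere_zero_iff_norm] at this
  have hzne : (z : (EuclideanSpace ℂ (Fin n))) ≠ 0 := by
    intro h; rw [h, norm_zero] at hznorm; exact absurd hznorm.symm (ne_of_gt hε)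
  have hrz : r (z : (EuclideanSpace ℂ (Fin n))) = (z : (EuclideanSpace ℂ (Fin n))) := by
    rw [hrdef]; simp [hznorm, div_self (ne_of_gt hε)]
  have hzΩ : (z : (EuclideanSpace ℂ (Fin n))) ∈ Ω := by
    constructor
    · exact hzne
    · show r (z : (EuclideanSpace ℂ (Fin n))) ∈ O
      rw [hrz]
      have : z ∈ Subtype.val ⁻¹' O := hOW ▸ hzW
      exact this
  have hg0 : ∀ x ∈ Ω, g x = 0 := by
    rintro x ⟨hx0, hxO⟩
    have hxn : (0:ℝ) < ‖x‖ := norm_pos_iff.mpr hx0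
    set c : ℂ := ((ε / ‖x‖ : ℝ) : ℂ) with hcdef
    have hc0 : c ≠ 0 := by
      simp only [hcdef, ne_eq, Complex.ofReal_eq_zero]
      positivity
    have hrxs : r x ∈ Metric.sphere (0:(EuclideanSpace ℂ (Fin n))) ε := by
      rw [mem_sphere_zero_iff_norm, hrdef]
      simp only [norm_smul, Complex.norm_real, Real.norm_eq_abs]
      rw [abs_of_pos (by positivity)]
      field_simp
    have hyW : (⟨r x, hrxs⟩ : Metric.sphere (0:(EuclideanSpace ℂ (Fin n))) ε) ∈ W := by
      rw [← hOW]; exact hxO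
    have hyC := hWC hyW j hj
    have heq : (fun i => (r x : (EuclideanSpace ℂ (Fin n))) i) = fun i => c * x i := by
      funext i
      simp [hrdef, hcdef, PiLp.smul_apply, smul_eq_mul]
    rw [heq, eval_mul_smul_hom (hhom j) c (fun i => x i)] at hyC
    have := mul_eq_zero.mp hyC
    rcases this with h | h
    · exact absurd h (pow_ne_zero _ hc0)
    · exact h
  have hev : g =ᶠ[nhds (z : (EuclideanSpace ℂ (Fin n)))] 0 := Filter.eventuallyEq_of_mem (hΩopen.mem_nhds hzΩ) hg0
  have hEq : Set.EqOn g 0 Set.univ :=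
    (gan j).eqOn_zero_of_preconnected_of_eventuallyEq_zero isPreconnected_univ
      (Set.mem_univ _) hev
  apply (hhom j).eq_zero_of_forall_eval_eq_zero
  intro x
  have := hEq (Set.mem_univ ((WithLp.equiv 2 (Fin n → ℂ)).symm x))
  simpa [hgdef] using this
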